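/- Let C₁ be a left-cancellative semigroup in which every element has finitely many left divisors (D(c) = {a | ∃ x, a*x = c} finite; a\c the unique x with a*x = c), let C₂ be a monoid, and let t : C₁ → C₂ → ℝ be a token from C₁ to C₂. Define the t-transform T from the monoid algebra MonoidAlgebra ℝ C₂ (finitely supported functions C₂ → ℝ with convolution product (k*k')(b) = ∑_{(a,c): a·c = b} k(a)·k'(c)) to functions on C₁ by (T k)(c₁) = ∑_{c₂ ∈ supp k} t(c₁, c₂)·k(c₂). Then T is an algebra homomorphism in the convolution sense: for all k₁, k₂ ∈ MonoidAlgebra ℝ C₂ and all c₁' ∈ C₁, T(k₂ * k₁)(c₁') = ∑_{c₁ ∈ D(c₁')} (T k₂)(c₁) · (T k₁)(c₁\c₁'). (T is also ℝ-linear.) -/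

import Mathlib

open scoped Classical Pointwise

/-- `ldiv a c` is the (unique, in a left-cancellative semigroup) solution `x` of `a * x = c`
when it exists, denoted `a\c` (an arbitrary default value otherwise). -/
noncomputable def ldiv {C : Type*} [Semigroup C] (a c : C) : C :=
  if h : ∃ x : C, a * x = c then h.choose else a

/-- The t-transform `(T k)(c₁) = ∑_{c₂ ∈ supp k} t(c₁,c₂)·k(c₂)` associated with a token `t`
from `C₁` to `C₂` is an algebra homomorphism from the convolution algebra
`MonoidAlgebra ℝ C₂` to the convolution algebra over `C₁`:
`T(k₂ * k₁)(c₁') = ∑_{c₁ ∈ D(c₁')} (T k₂)(c₁) · (T k₁)(c₁\c₁')`; moreover `T` is ℝ-linear. -/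
theorem t_transform_is_algebra_hom
    {C₁ : Type*} [Semigroup C₁]
    (hcan₁ : ∀ c a b : C₁, c * a = c * b → a = b)
    (hfin : ∀ c : C₁, {a : C₁ | ∃ x : C₁, a * x = c}.Finite)
    {C₂ : Type*} [Monoid C₂]
    (t : C₁ → C₂ → ℝ)
    (htoken : ∀ (c₁' : C₁) (c₂ c₂' : C₂),
      ∑ c₁ ∈ (hfin c₁').toFinset, t c₁ c₂ * t (ldiv c₁ c₁') c₂' = t c₁' (c₂ * c₂'))
    (T : MonoidAlgebra ℝ C₂ → C₁ → ℝ)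
    (hT : ∀ (k : MonoidAlgebra ℝ C₂) (c₁ : C₁),
      T k c₁ = ∑ c₂ ∈ k.coeff.support, t c₁ c₂ * k.coeff c₂) :
    (∀ (k₁ k₂ : MonoidAlgebra ℝ C₂) (c₁' : C₁),
        T (k₂ * k₁) c₁' =
          ∑ c₁ ∈ (hfin c₁').toFinset, T k₂ c₁ * T k₁ (ldiv c₁ c₁')) ∧
    (∀ (k₁ k₂ : MonoidAlgebra ℝ C₂), T (k₁ + k₂) = T k₁ + T k₂) ∧
    (∀ (r : ℝ) (k : MonoidAlgebra ℝ C₂), T (r • k) = r • T k) := by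
  have key : ∀ (k : MonoidAlgebra ℝ C₂) (c : C₁) (S : Finset C₂), k.coeff.support ⊆ S →
      T k c = ∑ c₂ ∈ S, t c c₂ * k.coeff c₂ := by
    intro k c S hS
    rw [hT, Finset.sum_subset hS]
    intro x _ hx
    simp [Finsupp.notMem_support_iff.mp hx]
  refine ⟨?_, ?_, ?_⟩
  · intro k₁ k₂ c₁'
    have hsub : (k₂ * k₁).coeff.support ⊆ k₂.coeff.support * k₁.coeff.support := MonoidAlgebra.support_coeff_mul_subset k₂ k₁
    rw [key _ _ _ hsub]
    have lhs : ∑ x ∈ k₂.coeff.support * k₁.coeff.support, t c₁' x * (k₂ * k₁).coeff x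
        = ∑ a ∈ k₂.coeff.support, ∑ b ∈ k₁.coeff.support, t c₁' (a * b) * (k₂.coeff a * k₁.coeff b) := by
      simp_rw [MonoidAlgebra.coeff_mul, Finsupp.sum, Finset.mul_sum, mul_ite, mul_zero]
      rw [Finset.sum_comm]
      refine Finset.sum_congr rfl fun a ha => ?_
      rw [Finset.sum_comm]
      refine Finset.sum_congr rfl fun b hb => ?_
      rw [Finset.sum_ite_eq (k₂.coeff.support * k₁.coeff.support) (a * b) (fun x => t c₁' x * (k₂.coeff a * k₁.coeff b))]
      simp [Finset.mul_mem_mul ha hb]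
    have rhs : ∑ c₁ ∈ (hfin c₁').toFinset, T k₂ c₁ * T k₁ (ldiv c₁ c₁')
        = ∑ a ∈ k₂.coeff.support, ∑ b ∈ k₁.coeff.support, t c₁' (a * b) * (k₂.coeff a * k₁.coeff b) := by
      simp_rw [hT, Finset.sum_mul, Finset.mul_sum]
      rw [Finset.sum_comm]
      refine Finset.sum_congr rfl fun a ha => ?_
      rw [Finset.sum_comm]
      refine Finset.sum_congr rfl fun b hb => ?_
      rw [← htoken c₁' a b, Finset.sum_mul]
      exact Finset.sum_congr rfl fun c₁ _ => by ring
    rw [lhs]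
    exact rhs.symm
  · intro k₁ k₂
    funext c
    have h1 : (k₁ + k₂).coeff.support ⊆ k₁.coeff.support ∪ k₂.coeff.support := Finsupp.support_add
    rw [Pi.add_apply, key _ _ _ h1, key k₁ c _ Finset.subset_union_left,
      key k₂ c _ Finset.subset_union_right, ← Finset.sum_add_distrib]
    refine Finset.sum_congr rfl fun x _ => ?_
    show t c x * (k₁.coeff x + k₂.coeff x) = _
    ring
  · intro r k
    funext c
    have h1 : (r • k).coeff.support ⊆ k.coeff.support := Finsupp.support_smul
    rw [Pi.smul_apply, key _ _ _ h1, hT, Finset.smul_sum]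
    refine Finset.sum_congr rfl fun x _ => ?_
    show t c x * (r • k.coeff x) = r • (t c x * k.coeff x)
    rw [smul_eq_mul, smul_eq_mul]; ring
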